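/- arXiv:math/0603681 — 4 statements merged into one kernel-verified Lean document; each statement's English description precedes it below -/
import Mathlib

section
/- For all real x₀, y₀, y₁, the polynomial p(s) = y₀ + y₁ s + 2x₀ s² + 2s³ + x₀ s⁴ + s⁵ is not stable, i.e., it has at least one complex root s with Re(s) ≥ 0. -/
lemma card_succ {α : Type*} {s : Multiset α} {n : ℕ} (h : Multiset.card s = n + 1) :
    ∃ a t, s = a ::ₘ t ∧ Multiset.card t = n := by
  obtain ⟨a, ha⟩ := Multiset.card_pos_iff_exists_mem.mp (by rw [h]; omega)
  classical
  refine ⟨a, s.erase a, (Multiset.cons_erase ha).symm, ?_⟩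
  have := Multiset.card_erase_of_mem ha
  rw [h] at this
  simpa using this

lemma card_five {α : Type*} {s : Multiset α} (h : Multiset.card s = 5) :
    ∃ a b c d e : α, s = a ::ₘ b ::ₘ c ::ₘ d ::ₘ e ::ₘ 0 := by
  obtain ⟨a, t1, rfl, h1⟩ := card_succ h
  obtain ⟨b, t2, rfl, h2⟩ := card_succ h1
  obtain ⟨c, t3, rfl, h3⟩ := card_succ h2
  obtain ⟨d, t4, rfl, h4⟩ := card_succ h3
  obtain ⟨e, t5, rfl, h5⟩ := card_succ h4
  exact ⟨a, b, c, d, e, by rw [Multiset.card_eq_zero.mp h5]⟩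

open Polynomial

theorem stmt_2 (x₀ y₀ y₁ : ℝ) :
    ∃ s : ℂ, (y₀ : ℂ) + y₁ * s + 2 * x₀ * s ^ 2 + 2 * s ^ 3 + x₀ * s ^ 4 + s ^ 5 = 0 ∧
      0 ≤ s.re := by
  by_contra hcon
  push_neg at hcon
  set P : Polynomial ℂ := X ^ 5 + C (x₀:ℂ) * X ^ 4 + C 2 * X ^ 3 + C (2*x₀:ℂ) * X ^ 2
      + C (y₁:ℂ) * X + C (y₀:ℂ) with hPdef
  have hmonic : P.Monic := by rw [hPdef]; monicity!
  have hdeg : P.natDegree = 5 := by rw [hPdef]; compute_degree!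
  have hsplit : P.Splits := IsAlgClosed.splits P
  have hcard : P.roots.card = 5 := by rw [splits_iff_card_roots.mp hsplit, hdeg]
  have hprod : P = (P.roots.map fun a => X - C a).prod :=
    hsplit.eq_prod_roots_of_monic hmonic
  obtain ⟨r₁, r₂, r₃, r₄, r₅, hroots⟩ := card_five hcard
  rw [hroots] at hprod
  have hP : ∀ s : ℂ, s^5 + x₀*s^4 + 2*s^3 + 2*x₀*s^2 + y₁*s + y₀
      = (s - r₁)*(s - r₂)*(s - r₃)*(s - r₄)*(s - r₅) := by
    intro s
    have := congrArg (Polynomial.eval s) hprod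
    simp [hPdef, Multiset.map_cons, Multiset.prod_cons] at this
    linear_combination this
  -- each root has negative real part
  have hroot : ∀ r : ℂ, (r - r₁)*(r - r₂)*(r - r₃)*(r - r₄)*(r - r₅) = 0 → r.re < 0 := by
    intro r hr
    apply hcon
    linear_combination (hP r) + hr
  have h1 : r₁.re < 0 := hroot r₁ (by ring)
  have h2 : r₂.re < 0 := hroot r₂ (by ring)
  have h3 : r₃.re < 0 := hroot r₃ (by ring)
  have h4 : r₄.re < 0 := hroot r₄ (by ring)
  have h5 : r₅.re < 0 := hroot r₅ (by ring)
  -- extract symmetric function relations via evaluations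
  have e0 := hP 0; have e1 := hP 1; have em1 := hP (-1)
  have e2 := hP 2; have em2 := hP (-2); have e3 := hP 3
  have he1 : r₁ + r₂ + r₃ + r₄ + r₅ = -(x₀:ℂ) := by
    linear_combination (1/4 : ℂ) * e0 - (1/6 : ℂ) * e1 - (1/6 : ℂ) * em1
      + (1/24 : ℂ) * e2 + (1/24 : ℂ) * em2
  have he2 : r₁*r₂ + r₁*r₃ + r₁*r₄ + r₁*r₅ + r₂*r₃ + r₂*r₄ + r₂*r₅ + r₃*r₄ + r₃*r₅ + r₄*r₅
      = 2 := by
    linear_combination (-5/12 : ℂ) * e0 + (7/12 : ℂ) * e1 + (1/24 : ℂ) * em1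
      - (7/24 : ℂ) * e2 + (1/24 : ℂ) * em2 + (1/24 : ℂ) * e3
  have he3 : r₁*r₂*r₃ + r₁*r₂*r₄ + r₁*r₂*r₅ + r₁*r₃*r₄ + r₁*r₃*r₅ + r₁*r₄*r₅
      + r₂*r₃*r₄ + r₂*r₃*r₅ + r₂*r₄*r₅ + r₃*r₄*r₅ = -(2*x₀:ℂ) := by
    linear_combination (-5/4 : ℂ) * e0 + (2/3 : ℂ) * e1 + (2/3 : ℂ) * em1
      - (1/24 : ℂ) * e2 - (1/24 : ℂ) * em2
  -- power sum relation: sum of cubes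
  have hps : r₁^3 + r₂^3 + r₃^3 + r₄^3 + r₅^3 = -(x₀:ℂ)^3 := by
    linear_combination ((r₁+r₂+r₃+r₄+r₅)^2 - (r₁+r₂+r₃+r₄+r₅)*(x₀:ℂ) + (x₀:ℂ)^2 - 6) * he1
      - 3*(r₁+r₂+r₃+r₄+r₅) * he2 + 3 * he3
  -- pass to real parts
  have hre3 : ∀ r : ℂ, (r^3).re = r.re^3 - 3*r.re*r.im^2 := by
    intro r
    simp [pow_succ, Complex.mul_re, Complex.mul_im]
    ring
  have hre1 : r₁.re + r₂.re + r₃.re + r₄.re + r₅.re = -x₀ := by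
    have := congrArg Complex.re he1
    simpa using this
  have hres : (r₁^3).re + (r₂^3).re + (r₃^3).re + (r₄^3).re + (r₅^3).re = -x₀^3 := by
    have := congrArg Complex.re hps
    simpa [← Complex.ofReal_pow] using this
  rw [hre3, hre3, hre3, hre3, hre3] at hres
  set a1 := r₁.re; set a2 := r₂.re; set a3 := r₃.re; set a4 := r₄.re; set a5 := r₅.re
  have hx : -x₀ = a1 + a2 + a3 + a4 + a5 := hre1.symm
  rw [show -x₀^3 = -(-(-x₀))^3 by ring, hx] at hres
  nlinarith [sq_nonneg r₁.im, sq_nonneg r₂.im, sq_nonneg r₃.im, sq_nonneg r₄.im, sq_nonneg r₅.im,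
    mul_nonneg (le_of_lt (neg_pos.mpr h1)) (sq_nonneg r₁.im),
    mul_nonneg (le_of_lt (neg_pos.mpr h2)) (sq_nonneg r₂.im),
    mul_nonneg (le_of_lt (neg_pos.mpr h3)) (sq_nonneg r₃.im),
    mul_nonneg (le_of_lt (neg_pos.mpr h4)) (sq_nonneg r₄.im),
    mul_nonneg (le_of_lt (neg_pos.mpr h5)) (sq_nonneg r₅.im),
    mul_pos (mul_pos (neg_pos.mpr h1) (neg_pos.mpr h2)) (neg_pos.mpr h3),
    mul_pos (neg_pos.mpr h1) (neg_pos.mpr h2),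
    mul_pos (neg_pos.mpr h1) (neg_pos.mpr h3),
    mul_pos (neg_pos.mpr h1) (neg_pos.mpr h4),
    mul_pos (neg_pos.mpr h1) (neg_pos.mpr h5),
    mul_pos (neg_pos.mpr h2) (neg_pos.mpr h3),
    mul_pos (neg_pos.mpr h2) (neg_pos.mpr h4),
    mul_pos (neg_pos.mpr h2) (neg_pos.mpr h5),
    mul_pos (neg_pos.mpr h3) (neg_pos.mpr h4),
    mul_pos (neg_pos.mpr h3) (neg_pos.mpr h5),
    mul_pos (neg_pos.mpr h4) (neg_pos.mpr h5)]
end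

section
/- With a third-order controller, the infimum over controller coefficients of the abscissa of the closed-loop polynomial (s⁴+2s²)(x₀+x₁s+x₂s²+s³)+y₀+y₁s+y₂s²+y₃s³ is −∞; i.e., for every real M there exist real coefficients x₀,x₁,x₂,y₀,y₁,y₂,y₃ such that every complex root s of this polynomial satisfies Re(s) < M. -/
theorem stmt_6 (M : ℝ) :
    ∃ x₀ x₁ x₂ y₀ y₁ y₂ y₃ : ℝ, ∀ s : ℂ,
      (s ^ 4 + 2 * s ^ 2) * ((x₀ : ℂ) + x₁ * s + x₂ * s ^ 2 + s ^ 3) +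
        y₀ + y₁ * s + y₂ * s ^ 2 + y₃ * s ^ 3 = 0 → s.re < M := by
  set a : ℝ := |M| + 1 with ha
  refine ⟨35*a^3 - 14*a, 21*a^2 - 2, 7*a,
    a^7, 7*a^6, 21*a^5 - 2*(35*a^3 - 14*a), 35*a^4 - 2*(21*a^2 - 2), ?_⟩
  intro s hs
  have key : (s + (a : ℂ)) ^ 7 = 0 := by
    rw [← hs]; push_cast; ring
  have h7 : s + (a : ℂ) = 0 := by
    exact pow_eq_zero_iff (by norm_num) |>.mp key
  have hsa : s = -(a : ℂ) := by linear_combination h7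
  rw [hsa]
  simp only [Complex.neg_re, Complex.ofReal_re]
  have : -a ≤ M - 1 := by
    rw [ha]
    have := neg_abs_le M
    linarith
  linarith
end

section
/- Suppose z is real and nonzero, and real numbers x₀, x₁, y₀, y₁, y₂ satisfy (s⁴+2s²)(x₀+x₁s+s²) + y₀+y₁s+y₂s² = (s−z)⁶ as polynomials in s. Then z = √15/5 or z = −√15/5. -/
theorem stmt_7 (z x₀ x₁ y₀ y₁ y₂ : ℝ) (hz : z ≠ 0)
    (h : ∀ s : ℂ, (s ^ 4 + 2 * s ^ 2) * ((x₀ : ℂ) + x₁ * s + s ^ 2) +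
        y₀ + y₁ * s + y₂ * s ^ 2 = (s - z) ^ 6) :
    z = Real.sqrt 15 / 5 ∨ z = -(Real.sqrt 15 / 5) := by
  have key : (z : ℂ) ^ 3 * 5 = 3 * z := by
    linear_combination (-75/960 : ℂ) * (h 1) + (75/960 : ℂ) * (h (-1))
      + (48/960 : ℂ) * (h 2) - (48/960 : ℂ) * (h (-2))
      - (7/960 : ℂ) * (h 3) + (7/960 : ℂ) * (h (-3))
  have keyR : z ^ 3 * 5 = 3 * z := by exact_mod_cast key
  have h0 : z * (z ^ 2 * 5 - 3) = 0 := by linear_combination keyR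
  have hz2 : z ^ 2 = 3 / 5 := by
    rcases mul_eq_zero.mp h0 with h1 | h1
    · exact absurd h1 hz
    · linarith
  have hs : (Real.sqrt 15 / 5) ^ 2 = 3 / 5 := by
    rw [div_pow, Real.sq_sqrt (by norm_num : (15:ℝ) ≥ 0)]
    norm_num
  have : (z - Real.sqrt 15 / 5) * (z + Real.sqrt 15 / 5) = 0 := by nlinarith [hz2, hs]
  rcases mul_eq_zero.mp this with h1 | h1
  · left; linarith
  · right; linarith
end

section
/- There is no real z with z < −√15/5 for which there exist real x₀, x₁, y₀, y₁, y₂ satisfying (s⁴+2s²)(x₀+x₁s+s²)+y₀+y₁s+y₂s² = (s−z)⁶ as polynomials in s. -/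
theorem stmt_10 :
    ¬ ∃ z : ℝ, z < -(Real.sqrt 15 / 5) ∧
      ∃ x₀ x₁ y₀ y₁ y₂ : ℝ, ∀ s : ℂ,
        (s ^ 4 + 2 * s ^ 2) * ((x₀ : ℂ) + x₁ * s + s ^ 2) +
          y₀ + y₁ * s + y₂ * s ^ 2 = (s - z) ^ 6 := by
  rintro ⟨z, hz, x₀, x₁, y₀, y₁, y₂, h⟩
  have key : ∀ a : ℝ, (a ^ 4 + 2 * a ^ 2) * (x₀ + x₁ * a + a ^ 2) +
      y₀ + y₁ * a + y₂ * a ^ 2 = (a - z) ^ 6 := by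
    intro a
    have := h a
    exact_mod_cast this
  have hzz : 3 * z = 5 * z ^ 3 := by
    linear_combination (5/64) * key 1 - (5/64) * key (-1) - (1/20) * key 2
      + (1/20) * key (-2) + (7/960) * key 3 - (7/960) * key (-3)
  have h15 : Real.sqrt 15 ^ 2 = 15 := Real.sq_sqrt (by norm_num)
  have hpos : Real.sqrt 15 ≥ 0 := Real.sqrt_nonneg 15
  nlinarith [sq_nonneg (z + Real.sqrt 15 / 5), sq_nonneg z]
end
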